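/- arXiv:2503.23403 — 3 statements merged into one kernel-verified Lean document; each statement's English description precedes it below -/
import Mathlib

section
/- For any probability measure μ on ℝ with finite second moment ρ² and any z in the upper half-plane, let G_μ(z) = ∫ 1/(z−x) dμ(x). Then |z·G_μ(z) − 1| ≤ (ρ/√(Im z)) · |G_μ(z)|^{1/2}. -/
open MeasureTheory Complex

theorem stmt_3 (μ : Measure ℝ) [IsProbabilityMeasure μ] (ρ : ℝ) (hρ : 0 ≤ ρ)
    (hint : Integrable (fun x : ℝ => x ^ 2) μ)
    (hvar : ∫ x, x ^ 2 ∂μ = ρ ^ 2)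
    (z : ℂ) (hz : 0 < z.im) :
    ‖z * (∫ x : ℝ, 1 / (z - x) ∂μ) - 1‖ ≤
      ρ / Real.sqrt z.im * (‖∫ x : ℝ, 1 / (z - x) ∂μ‖) ^ ((1 : ℝ) / 2) := by
  set f : ℝ → ℂ := fun x => 1 / (z - x) with hf_def
  have him : ∀ x : ℝ, (z - (x : ℂ)).im = z.im := by intro x; simp
  have hne : ∀ x : ℝ, (z - (x : ℂ)) ≠ 0 := by
    intro x h
    have := him x
    rw [h] at this
    simp at this
    exact hz.ne this
  have habs : ∀ x : ℝ, z.im ≤ ‖z - x‖ := by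
    intro x
    have := Complex.abs_im_le_norm (z - x)
    rwa [him x, abs_of_pos hz] at this
  have hcont : Continuous f := by
    apply Continuous.div continuous_const (continuous_const.sub Complex.continuous_ofReal) hne
  have hfnorm : ∀ x : ℝ, ‖f x‖ = (‖z - x‖)⁻¹ := by
    intro x; simp [hf_def, norm_div]
  have hfbound : ∀ x : ℝ, ‖f x‖ ≤ z.im⁻¹ := by
    intro x
    rw [hfnorm x]
    exact inv_anti₀ hz (habs x)
  have hfint : Integrable f μ := by
    refine (integrable_const z.im⁻¹).mono' hcont.aestronglyMeasurable ?_
    exact Filter.Eventually.of_forall hfbound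
  -- integrability of |x|
  have habsint : Integrable (fun x : ℝ => |x|) μ := by
    refine (hint.add (integrable_const 1)).mono' ?_ ?_
    · exact (_root_.continuous_abs.aestronglyMeasurable)
    · refine Filter.Eventually.of_forall fun x => ?_
      show ‖|x|‖ ≤ x ^ 2 + 1
      rw [Real.norm_eq_abs, _root_.abs_abs]
      rcases le_or_gt (|x|) 1 with h | h
      · nlinarith [sq_nonneg x]
      · nlinarith [_root_.sq_abs x, abs_nonneg x]
  -- integrability of x * f x
  have hxfint : Integrable (fun x : ℝ => (x : ℂ) * f x) μ := by
    refine (habsint.mul_const z.im⁻¹).mono'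
      (Complex.continuous_ofReal.mul hcont).aestronglyMeasurable ?_
    refine Filter.Eventually.of_forall fun x => ?_
    rw [norm_mul, Complex.norm_real, Real.norm_eq_abs]
    exact mul_le_mul_of_nonneg_left (hfbound x) (abs_nonneg x)
  set G : ℂ := ∫ x : ℝ, f x ∂μ with hG_def
  -- step 1 : z G - 1 = ∫ x * f x
  have hstep1 : z * G - 1 = ∫ x : ℝ, (x : ℂ) * f x ∂μ := by
    have h1 : z * G = ∫ x : ℝ, z * f x ∂μ := (integral_const_mul z f).symm
    have h2 : (1 : ℂ) = ∫ _ : ℝ, (1 : ℂ) ∂μ := by simp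
    rw [h1, h2, ← integral_sub (hfint.const_mul z) (integrable_const 1)]
    refine integral_congr_ae (Filter.Eventually.of_forall fun x => ?_)
    have := hne x
    simp only [hf_def]
    field_simp
    ring
  -- integrability of squared norm of f
  have hg : ∀ x : ℝ, ‖f x‖ ^ 2 = (Complex.normSq (z - x))⁻¹ := by
    intro x
    rw [hfnorm x, ← Complex.sq_norm]
    rw [inv_pow]
  have hgbound : ∀ x : ℝ, ‖f x‖ ^ 2 ≤ (z.im ^ 2)⁻¹ := by
    intro x
    rw [hg x, ← Complex.sq_norm]
    refine inv_anti₀ (by positivity) ?_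
    exact pow_le_pow_left₀ hz.le (habs x) 2
  have hgint : Integrable (fun x : ℝ => ‖f x‖ ^ 2) μ := by
    refine (integrable_const ((z.im ^ 2)⁻¹)).mono'
      ((hcont.norm.pow 2).aestronglyMeasurable) ?_
    refine Filter.Eventually.of_forall fun x => ?_
    rw [Real.norm_eq_abs, _root_.abs_of_nonneg (by positivity)]
    exact hgbound x
  -- the imaginary part identity
  have hGim : G.im = ∫ x : ℝ, (-(z.im) * ‖f x‖ ^ 2) ∂μ := by
    have h0 : G.im = ∫ x : ℝ, (f x).im ∂μ := by
      rw [hG_def, ← RCLike.im_eq_complex_im, integral_im hfint]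
    rw [h0]
    refine integral_congr_ae (Filter.Eventually.of_forall fun x => ?_)
    show (f x).im = -z.im * ‖f x‖ ^ 2
    rw [hg x]
    simp only [hf_def, one_div, Complex.inv_im, him x]
    ring
  have hint_g : ∫ x : ℝ, ‖f x‖ ^ 2 ∂μ ≤ ‖G‖ / z.im := by
    rw [integral_const_mul] at hGim
    have h1 : ∫ x : ℝ, ‖f x‖ ^ 2 ∂μ = -G.im / z.im := by
      rw [hGim]; field_simp
    rw [h1, div_le_div_iff_of_pos_right hz]
    calc -G.im ≤ |G.im| := neg_le_abs _
    _ ≤ ‖G‖ := Complex.abs_im_le_norm G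
  -- Cauchy-Schwarz
  have hCS : ∫ x : ℝ, |x| * ‖f x‖ ∂μ ≤
      (∫ x : ℝ, |x| ^ (2 : ℝ) ∂μ) ^ ((1 : ℝ) / 2) *
      (∫ x : ℝ, ‖f x‖ ^ (2 : ℝ) ∂μ) ^ ((1 : ℝ) / 2) := by
    refine integral_mul_le_Lp_mul_Lq_of_nonneg ?_ ?_ ?_ ?_ ?_
    · constructor <;> norm_num
    · exact Filter.Eventually.of_forall fun x => abs_nonneg x
    · exact Filter.Eventually.of_forall fun x => norm_nonneg _
    · rw [show ENNReal.ofReal 2 = 2 by norm_num]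
      refine (memLp_two_iff_integrable_sq _root_.continuous_abs.aestronglyMeasurable).2 ?_
      refine hint.congr ?_
      exact Filter.Eventually.of_forall fun x => (_root_.sq_abs x).symm
    · rw [show ENNReal.ofReal 2 = 2 by norm_num]
      exact (memLp_two_iff_integrable_sq hcont.norm.aestronglyMeasurable).2 hgint
  have hx2 : ∫ x : ℝ, |x| ^ (2 : ℝ) ∂μ = ρ ^ 2 := by
    rw [← hvar]
    refine integral_congr_ae (Filter.Eventually.of_forall fun x => ?_)
    show |x| ^ (2 : ℝ) = x ^ 2
    rw [Real.rpow_two, _root_.sq_abs]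
  have hf2 : ∫ x : ℝ, ‖f x‖ ^ (2 : ℝ) ∂μ = ∫ x : ℝ, ‖f x‖ ^ 2 ∂μ := by
    refine integral_congr_ae (Filter.Eventually.of_forall fun x => ?_)
    show ‖f x‖ ^ (2 : ℝ) = ‖f x‖ ^ 2
    rw [Real.rpow_two]
  -- put it together
  rw [hstep1]
  calc ‖∫ x : ℝ, (x : ℂ) * f x ∂μ‖
      = ‖∫ x : ℝ, (x : ℂ) * f x ∂μ‖ := rfl
    _ ≤ ∫ x : ℝ, ‖(x : ℂ) * f x‖ ∂μ := norm_integral_le_integral_norm _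
    _ = ∫ x : ℝ, |x| * ‖f x‖ ∂μ := by
        refine integral_congr_ae (Filter.Eventually.of_forall fun x => ?_)
        show ‖(x : ℂ) * f x‖ = |x| * ‖f x‖
        rw [norm_mul, Complex.norm_real, Real.norm_eq_abs]
    _ ≤ (∫ x : ℝ, |x| ^ (2 : ℝ) ∂μ) ^ ((1 : ℝ) / 2) *
        (∫ x : ℝ, ‖f x‖ ^ (2 : ℝ) ∂μ) ^ ((1 : ℝ) / 2) := hCS
    _ = ρ * (∫ x : ℝ, ‖f x‖ ^ 2 ∂μ) ^ ((1 : ℝ) / 2) := by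
        rw [hx2, hf2, ← Real.rpow_natCast ρ 2, ← Real.rpow_mul hρ]
        norm_num
    _ ≤ ρ * (‖G‖ / z.im) ^ ((1 : ℝ) / 2) := by
        refine mul_le_mul_of_nonneg_left ?_ hρ
        refine Real.rpow_le_rpow ?_ hint_g (by norm_num)
        exact integral_nonneg fun x => by positivity
    _ = ρ / Real.sqrt z.im * (‖G‖) ^ ((1 : ℝ) / 2) := by
        rw [Real.div_rpow (by positivity) hz.le, Real.sqrt_eq_rpow]
        ring
end

section
/- Let μ and ν be probability measures on ℝ with Cauchy transforms G_μ and G_ν, and let Δ(μ,ν) = sup_x |μ((−∞,x]) − ν((−∞,x])| denote their Kolmogorov distance. Then for every z in the upper half-plane, |G_μ(z) − G_ν(z)| ≤ π·Δ(μ,ν)/Im z. -/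
open MeasureTheory Complex

-- auxiliary: integrability and integral of t ↦ ((t-a)^2+b^2)⁻¹
lemma aux_integrable (a b : ℝ) (hb : 0 < b) :
    Integrable (fun t : ℝ => ((t - a) ^ 2 + b ^ 2)⁻¹) := by
  have h : (fun t : ℝ => ((t - a) ^ 2 + b ^ 2)⁻¹)
      = fun t : ℝ => b⁻¹ ^ 2 * (1 + ((t - a) / b) ^ 2)⁻¹ := by
    funext t
    field_simp
    ring
  rw [h]
  exact (((integrable_inv_one_add_sq.comp_div hb.ne').comp_sub_right a).const_mul _)

lemma aux_integral (a b : ℝ) (hb : 0 < b) :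
    (∫ t : ℝ, ((t - a) ^ 2 + b ^ 2)⁻¹) = Real.pi / b := by
  have h : (fun t : ℝ => ((t - a) ^ 2 + b ^ 2)⁻¹)
      = fun t : ℝ => b⁻¹ ^ 2 * (1 + ((t - a) / b) ^ 2)⁻¹ := by
    funext t; field_simp; ring
  rw [h, integral_const_mul]
  rw [show (fun t : ℝ => (1 + ((t - a) / b) ^ 2)⁻¹)
      = (fun t : ℝ => ((fun s : ℝ => (1 + (s / b) ^ 2)⁻¹) (t - a))) from rfl]
  rw [integral_sub_right_eq_self (fun s : ℝ => (1 + (s / b) ^ 2)⁻¹) a]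
  rw [show (fun s : ℝ => (1 + (s / b) ^ 2)⁻¹)
      = (fun s : ℝ => ((fun u : ℝ => (1 + u ^ 2)⁻¹) (s / b))) from rfl]
  rw [MeasureTheory.Measure.integral_comp_div (fun u : ℝ => (1 + u ^ 2)⁻¹) b]
  rw [integral_univ_inv_one_add_sq, abs_of_pos hb, smul_eq_mul]
  field_simp

lemma aux_ne (z : ℂ) (hz : 0 < z.im) (t : ℝ) : z - (t : ℂ) ≠ 0 := by
  intro h
  have : (z - (t : ℂ)).im = 0 := by rw [h]; simp
  simp at this
  linarith

lemma aux_norm (z : ℂ) (hz : 0 < z.im) (t : ℝ) :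
    ‖((z - (t : ℂ)) ^ 2)⁻¹‖ = ((t - z.re) ^ 2 + z.im ^ 2)⁻¹ := by
  rw [norm_inv, norm_pow]
  congr 1
  rw [Complex.sq_norm, Complex.normSq_apply]
  simp
  ring

lemma aux_cont (z : ℂ) (hz : 0 < z.im) :
    Continuous (fun t : ℝ => ((z - (t : ℂ)) ^ 2)⁻¹) := by
  apply Continuous.inv₀
  · fun_prop
  · intro t
    exact pow_ne_zero 2 (aux_ne z hz t)

lemma aux_integrableC (z : ℂ) (hz : 0 < z.im) :
    Integrable (fun t : ℝ => ((z - (t : ℂ)) ^ 2)⁻¹) := by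
  apply Integrable.mono' (aux_integrable z.re z.im hz)
    ((aux_cont z hz).aestronglyMeasurable)
  filter_upwards with t
  rw [aux_norm z hz t]

lemma aux_ftc (z : ℂ) (hz : 0 < z.im) (x : ℝ) :
    (z - (x : ℂ))⁻¹ = -∫ t in Set.Ioi x, ((z - (t : ℂ)) ^ 2)⁻¹ := by
  have hderiv : ∀ t ∈ Set.Ici x, HasDerivAt (fun s : ℝ => (z - (s : ℂ))⁻¹)
      (((z - (t : ℂ)) ^ 2)⁻¹) t := by
    intro t _
    have h1 : HasDerivAt (fun s : ℝ => ((s : ℝ) : ℂ)) 1 t := by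
      simpa using (hasDerivAt_id t).ofReal_comp
    have h2 : HasDerivAt (fun w : ℂ => (z - w)⁻¹) (-(-1) / (z - (t : ℂ)) ^ 2) (t : ℂ) :=
      ((hasDerivAt_id ((t : ℝ) : ℂ)).const_sub z).inv (aux_ne z hz t)
    have h3 := h2.comp_ofReal
    convert h3 using 1
    rw [neg_neg, one_div]
  have htend : Filter.Tendsto (fun s : ℝ => (z - (s : ℂ))⁻¹) Filter.atTop (nhds 0) := by
    rw [tendsto_zero_iff_norm_tendsto_zero]
    have hb : ∀ᶠ s : ℝ in Filter.atTop, ‖(z - (s : ℂ))⁻¹‖ ≤ (s - z.re)⁻¹ := by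
      filter_upwards [Filter.eventually_gt_atTop z.re] with s hs
      rw [norm_inv]
      apply inv_anti₀ (by linarith)
      have hre : (z - (s : ℂ)).re = z.re - s := by simp
      calc s - z.re ≤ |z.re - s| := by rw [abs_sub_comm]; exact le_abs_self _
        _ = |(z - (s : ℂ)).re| := by rw [hre]
        _ ≤ ‖z - (s : ℂ)‖ := Complex.abs_re_le_norm _
        _ = ‖z - (s : ℂ)‖ := rfl
    have h0 : ∀ᶠ s : ℝ in Filter.atTop, 0 ≤ ‖(z - (s : ℂ))⁻¹‖ :=
      Filter.Eventually.of_forall fun s => norm_nonneg _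
    refine squeeze_zero' h0 hb ?_
    exact Filter.Tendsto.inv_tendsto_atTop (Filter.tendsto_atTop_add_const_right _ _ Filter.tendsto_id)
  have := integral_Ioi_of_hasDerivAt_of_tendsto' hderiv
    ((aux_integrableC z hz).integrableOn) htend
  rw [this]
  simp

lemma aux_F_integrable (z : ℂ) (hz : 0 < z.im) (μ : Measure ℝ) [IsProbabilityMeasure μ] :
    Integrable (fun p : ℝ × ℝ =>
      Set.indicator {q : ℝ × ℝ | q.1 ≤ q.2} (fun q => ((z - (q.2 : ℂ)) ^ 2)⁻¹) p)
      (μ.prod volume) := by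
  set g := fun t : ℝ => ((z - (t : ℂ)) ^ 2)⁻¹ with hg
  have hmeas : AEStronglyMeasurable (fun p : ℝ × ℝ =>
      Set.indicator {q : ℝ × ℝ | q.1 ≤ q.2} (fun q => g q.2) p) (μ.prod volume) := by
    apply StronglyMeasurable.aestronglyMeasurable
    exact (((aux_cont z hz).stronglyMeasurable).comp_measurable measurable_snd).indicator
      (measurableSet_le measurable_fst measurable_snd)
  rw [integrable_prod_iff hmeas]
  constructor
  · filter_upwards with x
    have : (fun t : ℝ => Set.indicator {q : ℝ × ℝ | q.1 ≤ q.2} (fun q => g q.2) (x, t))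
        = Set.indicator (Set.Ici x) g := by
      funext t
      by_cases h : x ≤ t <;> simp [Set.indicator_apply, h]
    rw [this]
    exact (aux_integrableC z hz).indicator measurableSet_Ici
  · apply Integrable.mono' (integrable_const (Real.pi / z.im))
    · exact hmeas.norm.integral_prod_right'
    · filter_upwards with x
      have hnn : 0 ≤ ∫ t : ℝ, ‖Set.indicator {q : ℝ × ℝ | q.1 ≤ q.2} (fun q => g q.2) (x, t)‖ :=
        integral_nonneg fun t => norm_nonneg _
      rw [Real.norm_of_nonneg hnn]
      calc (∫ t : ℝ, ‖Set.indicator {q : ℝ × ℝ | q.1 ≤ q.2} (fun q => g q.2) (x, t)‖)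
          ≤ ∫ t : ℝ, ((t - z.re) ^ 2 + z.im ^ 2)⁻¹ := by
            apply integral_mono_of_nonneg (Filter.Eventually.of_forall fun t => norm_nonneg _)
              (aux_integrable z.re z.im hz)
            filter_upwards with t
            rw [← aux_norm z hz t]
            exact norm_indicator_le_norm_self _ _
        _ = Real.pi / z.im := aux_integral z.re z.im hz

lemma aux_transform (z : ℂ) (hz : 0 < z.im) (μ : Measure ℝ) [IsProbabilityMeasure μ] :
    (∫ x : ℝ, (z - (x : ℂ))⁻¹ ∂μ)
      = -∫ t : ℝ, ((μ (Set.Iic t)).toReal : ℂ) * ((z - (t : ℂ)) ^ 2)⁻¹ := by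
  set g := fun t : ℝ => ((z - (t : ℂ)) ^ 2)⁻¹ with hg
  have step1 : (∫ x : ℝ, (z - (x : ℂ))⁻¹ ∂μ)
      = -∫ x : ℝ, (∫ t : ℝ, Set.indicator {q : ℝ × ℝ | q.1 ≤ q.2} (fun q => g q.2) (x, t)) ∂μ := by
    rw [← integral_neg]
    apply integral_congr_ae
    filter_upwards with x
    rw [aux_ftc z hz x]
    congr 1
    have : (fun t : ℝ => Set.indicator {q : ℝ × ℝ | q.1 ≤ q.2} (fun q => g q.2) (x, t))
        = Set.indicator (Set.Ici x) g := by
      funext t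
      by_cases h : x ≤ t <;> simp [Set.indicator_apply, h]
    rw [this, integral_indicator measurableSet_Ici, ← integral_Ici_eq_integral_Ioi]
  rw [step1]
  congr 1
  rw [integral_integral_swap (aux_F_integrable z hz μ)]
  apply integral_congr_ae
  filter_upwards with t
  have : (fun x : ℝ => Set.indicator {q : ℝ × ℝ | q.1 ≤ q.2} (fun q => g q.2) (x, t))
      = Set.indicator (Set.Iic t) (fun _ => g t) := by
    funext x
    by_cases h : x ≤ t <;> simp [Set.indicator_apply, h]
  rw [this, integral_indicator_const _ measurableSet_Iic]
  simp [smul_eq_mul]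
  rfl

lemma aux_cdf_meas (μ : Measure ℝ) [IsFiniteMeasure μ] :
    Measurable fun t : ℝ => (μ (Set.Iic t)).toReal := by
  apply Monotone.measurable
  intro s t hst
  apply ENNReal.toReal_mono (measure_ne_top μ _)
  exact measure_mono (Set.Iic_subset_Iic.mpr hst)

lemma aux_cdf_int (z : ℂ) (hz : 0 < z.im) (μ : Measure ℝ) [IsProbabilityMeasure μ] :
    Integrable (fun t : ℝ => ((μ (Set.Iic t)).toReal : ℂ) * ((z - (t : ℂ)) ^ 2)⁻¹) := by
  apply Integrable.mono' (aux_integrable z.re z.im hz)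
  · exact (Complex.measurable_ofReal.comp (aux_cdf_meas μ)).aestronglyMeasurable.mul
      (aux_cont z hz).aestronglyMeasurable
  · filter_upwards with t
    rw [norm_mul, aux_norm z hz t, Complex.norm_real, Real.norm_of_nonneg ENNReal.toReal_nonneg]
    have h1 : (μ (Set.Iic t)).toReal ≤ 1 := by
      simpa using ENNReal.toReal_mono (by simp) (prob_le_one (μ := μ) (s := Set.Iic t))
    nlinarith [inv_nonneg.mpr (by positivity : (0:ℝ) ≤ (t - z.re) ^ 2 + z.im ^ 2)]

/-- The Kolmogorov distance between two Borel measures on `ℝ`. -/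
noncomputable def kolDist (μ ν : Measure ℝ) : ℝ :=
  ⨆ x : ℝ, |(μ (Set.Iic x)).toReal - (ν (Set.Iic x)).toReal|

theorem stmt_7 (μ ν : Measure ℝ) [IsProbabilityMeasure μ] [IsProbabilityMeasure ν]
    (z : ℂ) (hz : 0 < z.im) :
    ‖(∫ x : ℝ, 1 / (z - x) ∂μ) - ∫ x : ℝ, 1 / (z - x) ∂ν‖ ≤
      Real.pi * kolDist μ ν / z.im := by
  have hΔ : ∀ t : ℝ, |(μ (Set.Iic t)).toReal - (ν (Set.Iic t)).toReal| ≤ kolDist μ ν := by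
    intro t
    apply le_ciSup (f := fun x : ℝ => |(μ (Set.Iic x)).toReal - (ν (Set.Iic x)).toReal|)
    refine ⟨1, ?_⟩
    rintro y ⟨x, rfl⟩
    have h1 : (μ (Set.Iic x)).toReal ≤ 1 := by
      simpa using ENNReal.toReal_mono (by simp) (prob_le_one (μ := μ) (s := Set.Iic x))
    have h2 : (ν (Set.Iic x)).toReal ≤ 1 := by
      simpa using ENNReal.toReal_mono (by simp) (prob_le_one (μ := ν) (s := Set.Iic x))
    have h3 : 0 ≤ (μ (Set.Iic x)).toReal := ENNReal.toReal_nonneg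
    have h4 : 0 ≤ (ν (Set.Iic x)).toReal := ENNReal.toReal_nonneg
    rw [abs_sub_le_iff]; constructor <;> linarith
  simp_rw [one_div]
  rw [aux_transform z hz μ, aux_transform z hz ν]
  rw [show (-∫ t : ℝ, ((μ (Set.Iic t)).toReal : ℂ) * ((z - (t : ℂ)) ^ 2)⁻¹)
      - (-∫ t : ℝ, ((ν (Set.Iic t)).toReal : ℂ) * ((z - (t : ℂ)) ^ 2)⁻¹)
      = (∫ t : ℝ, ((ν (Set.Iic t)).toReal : ℂ) * ((z - (t : ℂ)) ^ 2)⁻¹)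
      - (∫ t : ℝ, ((μ (Set.Iic t)).toReal : ℂ) * ((z - (t : ℂ)) ^ 2)⁻¹) by ring]
  rw [← integral_sub (aux_cdf_int z hz ν) (aux_cdf_int z hz μ)]
  calc ‖∫ t : ℝ, (((ν (Set.Iic t)).toReal : ℂ) * ((z - (t : ℂ)) ^ 2)⁻¹
          - ((μ (Set.Iic t)).toReal : ℂ) * ((z - (t : ℂ)) ^ 2)⁻¹)‖
      ≤ ∫ t : ℝ, ‖(((ν (Set.Iic t)).toReal : ℂ) * ((z - (t : ℂ)) ^ 2)⁻¹
          - ((μ (Set.Iic t)).toReal : ℂ) * ((z - (t : ℂ)) ^ 2)⁻¹)‖ :=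
        norm_integral_le_integral_norm _
    _ ≤ ∫ t : ℝ, kolDist μ ν * ((t - z.re) ^ 2 + z.im ^ 2)⁻¹ := by
        apply integral_mono_of_nonneg (Filter.Eventually.of_forall fun t => norm_nonneg _)
          ((aux_integrable z.re z.im hz).const_mul _)
        filter_upwards with t
        rw [← sub_mul, norm_mul, aux_norm z hz t]
        apply mul_le_mul_of_nonneg_right _ (inv_nonneg.mpr (by positivity))
        rw [← Complex.ofReal_sub, Complex.norm_real, Real.norm_eq_abs, abs_sub_comm]
        exact hΔ t
    _ = kolDist μ ν * (Real.pi / z.im) := by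
        rw [integral_const_mul, aux_integral z.re z.im hz]
    _ = Real.pi * kolDist μ ν / z.im := by ring
end

section
/- For every z in the upper half-plane with |Re z| < 1 one has (Im √(z²−4))² = ((√(((Re z)²−(Im z)²−4)² + 4(Re z)²(Im z)²) − ((Re z)²−(Im z)²−4))/2) ≥ 1, where the square root branch cut is on [0,∞). In particular Im √(z²−4) ≥ 1. -/
open Complex

/-- The complex square root with branch cut on the non-negative real axis. -/
noncomputable def sqrtCut (z : ℂ) : ℂ := Complex.I * (-z) ^ ((1 : ℂ) / 2)

theorem stmt_11 (z : ℂ) (hz : 0 < z.im) (hre : |z.re| < 1) :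
    (sqrtCut (z ^ 2 - 4)).im ^ 2 =
      (Real.sqrt ((z.re ^ 2 - z.im ^ 2 - 4) ^ 2 + 4 * z.re ^ 2 * z.im ^ 2)
        - (z.re ^ 2 - z.im ^ 2 - 4)) / 2 ∧
    1 ≤ (sqrtCut (z ^ 2 - 4)).im ^ 2 ∧
    1 ≤ (sqrtCut (z ^ 2 - 4)).im := by
  set w : ℂ := z ^ 2 - 4 with hw
  have hwre : w.re = z.re ^ 2 - z.im ^ 2 - 4 := by
    simp [hw, pow_two, Complex.mul_re]
  have hwim : w.im = 2 * z.re * z.im := by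
    simp [hw, pow_two, Complex.mul_im]; ring
  -- sqrtCut w squared equals w
  have hsq : (sqrtCut w) ^ 2 = w := by
    have h2 : ((-w) ^ ((1 : ℂ) / 2)) ^ (2 : ℕ) = -w := by
      have := Complex.cpow_nat_inv_pow (-w) (two_ne_zero (α := ℕ))
      simpa [one_div] using this
    have hd : sqrtCut w = Complex.I * (-w) ^ ((1 : ℂ) / 2) := rfl
    rw [hd, mul_pow, Complex.I_sq, h2]; ring
  set u : ℂ := sqrtCut w with hu
  set a : ℝ := u.re
  set b : ℝ := u.im
  have hre2 : a ^ 2 - b ^ 2 = w.re := by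
    have := congrArg Complex.re hsq
    simpa [pow_two, Complex.mul_re] using this
  have him2 : 2 * a * b = w.im := by
    have := congrArg Complex.im hsq
    simp [pow_two, Complex.mul_im] at this
    linarith
  -- b ≥ 0
  have hbnn : 0 ≤ b := by
    rcases eq_or_ne (-w) 0 with h0 | h0
    · show (0:ℝ) ≤ (sqrtCut w).im
      simp [sqrtCut, h0, Complex.zero_cpow (by norm_num : (1:ℂ)/2 ≠ 0)]
    · have hb : b = ((-w) ^ ((1 : ℂ) / 2)).re := by
        show (sqrtCut w).im = _
        simp [sqrtCut, Complex.mul_im]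
      rw [hb, Complex.cpow_def_of_ne_zero h0]
      rw [Complex.exp_re]
      have him : (Complex.log (-w) * (1 / 2)).im = Complex.arg (-w) / 2 := by
        simp [Complex.mul_im, Complex.log_im]
        ring
      rw [him]
      have h1 := Complex.neg_pi_lt_arg (-w)
      have h2 := Complex.arg_le_pi (-w)
      have : 0 ≤ Real.cos (Complex.arg (-w) / 2) :=
        Real.cos_nonneg_of_mem_Icc ⟨by linarith, by linarith⟩
      positivity
  -- key sqrt identity
  have hkey : Real.sqrt (w.re ^ 2 + w.im ^ 2) = a ^ 2 + b ^ 2 := by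
    have : w.re ^ 2 + w.im ^ 2 = (a ^ 2 + b ^ 2) ^ 2 := by
      rw [← hre2, ← him2]; ring
    rw [this, Real.sqrt_sq (by positivity)]
  have hb2 : b ^ 2 = (Real.sqrt (w.re ^ 2 + w.im ^ 2) - w.re) / 2 := by
    rw [hkey, ← hre2]; ring
  have heqarg : (z.re ^ 2 - z.im ^ 2 - 4) ^ 2 + 4 * z.re ^ 2 * z.im ^ 2
      = w.re ^ 2 + w.im ^ 2 := by rw [hwre, hwim]; ring
  have hmain : b ^ 2 =
      (Real.sqrt ((z.re ^ 2 - z.im ^ 2 - 4) ^ 2 + 4 * z.re ^ 2 * z.im ^ 2)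
        - (z.re ^ 2 - z.im ^ 2 - 4)) / 2 := by
    rw [heqarg, ← hwre, hb2]
  have hre1 : z.re ^ 2 < 1 := by
    have := abs_lt.mp hre
    nlinarith [this.1, this.2]
  have hb2ge : 1 ≤ b ^ 2 := by
    rw [hmain]
    have hs : 0 ≤ Real.sqrt ((z.re ^ 2 - z.im ^ 2 - 4) ^ 2 + 4 * z.re ^ 2 * z.im ^ 2) :=
      Real.sqrt_nonneg _
    nlinarith [sq_nonneg z.im, hz]
  refine ⟨hmain, hb2ge, ?_⟩
  nlinarith [hbnn, hb2ge]
end
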